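/- Let S be a blocking semioval with exactly 25 points in PG(2,11) such that no line meets S in more than 6 points (in particular S has no 10-secant). Then at least four points of S lie on exactly three 6-secants to S. -/

import Mathlib

instance : Fact (Nat.Prime 11) := ⟨by norm_num⟩

/-- The points of `PG(2,11)`: the projectivization of `(ZMod 11)^3`. -/
abbrev PGPoint : Type := Projectivization (ZMod 11) (Fin 3 → ZMod 11)

/-- The lines of `PG(2,11)`: the 2-dimensional subspaces of `(ZMod 11)^3`. -/
abbrev PGLine : Type :=
  {W : Submodule (ZMod 11) (Fin 3 → ZMod 11) // Module.finrank (ZMod 11) W = 2}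

/-- Incidence: a point lies on a line when its representing 1-dimensional
subspace is contained in the line's 2-dimensional subspace. -/
def PGmem (P : PGPoint) (L : PGLine) : Prop := Projectivization.submodule P ≤ L.val

/-- The set of points lying on a line. -/
def linePts (L : PGLine) : Set PGPoint := {P | PGmem P L}

/-- The set of points of `S` lying on the line `L`. -/
def secantPts (S : Set PGPoint) (L : PGLine) : Set PGPoint := {P ∈ S | PGmem P L}

/-- A line is a `k`-secant to `S` if it meets `S` in exactly `k` points. -/
def IsSecant (S : Set PGPoint) (k : ℕ) (L : PGLine) : Prop := (secantPts S L).ncard = k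

/-- A tangent line to `S` is a 1-secant. -/
def IsTangent (S : Set PGPoint) (L : PGLine) : Prop := IsSecant S 1 L

/-- A blocking set: every line meets `S`, but `S` contains no line. -/
def IsBlockingSet (S : Set PGPoint) : Prop :=
  (∀ L : PGLine, (secantPts S L).Nonempty) ∧ ∀ L : PGLine, ¬ linePts L ⊆ S

/-- A semioval: every point of `S` lies on exactly one tangent line to `S`. -/
def IsSemioval (S : Set PGPoint) : Prop :=
  ∀ P ∈ S, ∃! L : PGLine, PGmem P L ∧ IsTangent S L

/-- A blocking semioval is both a blocking set and a semioval. -/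
def IsBlockingSemioval (S : Set PGPoint) : Prop := IsBlockingSet S ∧ IsSemioval S

/-! ### Auxiliary material -/

open Module Submodule

local notation "V3" => (Fin 3 → ZMod 11)

namespace PGAux

/-! #### Counting one-dimensional subspaces -/

lemma span_eq_of_mem_rankone {U : Type*} [AddCommGroup U] [Module (ZMod 11) U]
    [FiniteDimensional (ZMod 11) U]
    {W : Submodule (ZMod 11) U} (hW : finrank (ZMod 11) ↥W = 1) {v : U} (hv : v ≠ 0)
    (hvW : v ∈ W) : Submodule.span (ZMod 11) {v} = W := by
  apply Submodule.eq_of_le_of_finrank_le ((Submodule.span_singleton_le_iff_mem _ _).2 hvW)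
  rw [finrank_span_singleton hv, hW]

noncomputable def fiberEquiv {U : Type*} [AddCommGroup U] [Module (ZMod 11) U]
    [FiniteDimensional (ZMod 11) U] (P : Projectivization (ZMod 11) U) :
    {v : {v : U // v ≠ 0} // Projectivization.mk (ZMod 11) v.1 v.2 = P} ≃
      {w : P.submodule // w ≠ 0} where
  toFun x := ⟨⟨x.1.1, by
      have h := congrArg Projectivization.submodule x.2
      rw [Projectivization.submodule_mk] at h
      exact h ▸ Submodule.mem_span_singleton_self _⟩, by
      simp only [ne_eq, Submodule.mk_eq_zero]; exact x.1.2⟩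
  invFun w := ⟨⟨w.1.1, fun h => w.2 (Subtype.ext h)⟩, by
      apply Projectivization.submodule_injective
      rw [Projectivization.submodule_mk]
      exact span_eq_of_mem_rankone P.finrank_submodule (fun h => w.2 (Subtype.ext h)) w.1.2⟩
  left_inv x := Subtype.ext (Subtype.ext rfl)
  right_inv w := Subtype.ext (Subtype.ext rfl)

lemma card_nonzero (W : Type*) [AddCommGroup W] [Module (ZMod 11) W] [Finite W] :
    Nat.card {w : W // w ≠ 0} = 11 ^ finrank (ZMod 11) W - 1 := by
  classical
  have : Fintype W := Fintype.ofFinite W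
  have h2 : Nat.card {w : W // ¬ (w = 0)} =
      Fintype.card W - Fintype.card {w : W // w = 0} := by
    rw [Nat.card_eq_fintype_card]; exact Fintype.card_subtype_compl _
  rw [Fintype.card_subtype_eq (0 : W)] at h2
  have h3 : Fintype.card W = 11 ^ finrank (ZMod 11) W := by
    rw [card_eq_pow_finrank (K := ZMod 11)]; simp [ZMod.card]
  rw [← h3]; exact h2

lemma card_proj (U : Type*) [AddCommGroup U] [Module (ZMod 11) U] [Finite U] :
    Nat.card (Projectivization (ZMod 11) U) * 10 + 1 = 11 ^ finrank (ZMod 11) U := by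
  classical
  have : Fintype U := Fintype.ofFinite U
  have hfin : Finite (Projectivization (ZMod 11) U) := Quotient.finite _
  have : Fintype (Projectivization (ZMod 11) U) := Fintype.ofFinite _
  set f : {v : U // v ≠ 0} → Projectivization (ZMod 11) U :=
    fun v => Projectivization.mk (ZMod 11) v.1 v.2 with hf
  have key : ∀ P, Nat.card {v // f v = P} = 10 := by
    intro P
    rw [Nat.card_congr (fiberEquiv P), card_nonzero, P.finrank_submodule]; norm_num
  have htot : Nat.card {v : U // v ≠ 0} = Fintype.card (Projectivization (ZMod 11) U) * 10 := by
    rw [Nat.card_congr (Equiv.sigmaFiberEquiv f).symm, Nat.card_eq_fintype_card,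
      Fintype.card_sigma]
    have : ∀ P, Fintype.card {v // f v = P} = 10 := by
      intro P; rw [← Nat.card_eq_fintype_card]; exact key P
    simp [this, Finset.sum_const, mul_comm]
  rw [card_nonzero] at htot
  have hpos : 0 < 11 ^ finrank (ZMod 11) U := Nat.pow_pos (by norm_num)
  rw [Nat.card_eq_fintype_card]
  omega

/-! #### Geometry of `PG(2,11)` -/

lemma finrank_V3 : finrank (ZMod 11) V3 = 3 := Module.finrank_fin_fun _

set_option synthInstance.maxHeartbeats 1000000 in
lemma finrank_map_mkQ {W M : Submodule (ZMod 11) V3} (h : W ≤ M) :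
    finrank (ZMod 11) (M.map W.mkQ) + finrank (ZMod 11) W = finrank (ZMod 11) M := by
  have h1 : M.map W.mkQ = LinearMap.range (W.mkQ.comp M.subtype) := by
    rw [LinearMap.range_comp, Submodule.range_subtype]
  have h2 : LinearMap.ker (W.mkQ.comp M.subtype) = W.comap M.subtype := by
    rw [LinearMap.ker_comp, Submodule.ker_mkQ]
  have h3 := LinearMap.finrank_range_add_finrank_ker (W.mkQ.comp M.subtype)
  rw [h1, ← h3, h2]
  congr 1
  exact ((Submodule.comapSubtypeEquivOfLe h).finrank_eq).symm

lemma finrank_quot (W : Submodule (ZMod 11) V3) :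
    finrank (ZMod 11) (V3 ⧸ W) + finrank (ZMod 11) W = 3 := by
  have h := finrank_map_mkQ (le_top (a := W))
  rw [Submodule.map_top, Submodule.range_mkQ, finrank_top, finrank_top, finrank_V3] at h
  exact h

noncomputable def linesThroughEquiv (P : PGPoint) :
    {L : PGLine // PGmem P L} ≃
      {U : Submodule (ZMod 11) (V3 ⧸ P.submodule) // finrank (ZMod 11) U = 1} where
  toFun L := ⟨L.1.1.map P.submodule.mkQ, by
    have h5 := finrank_map_mkQ L.2
    rw [P.finrank_submodule, L.1.2] at h5; omega⟩
  invFun U := ⟨⟨U.1.comap P.submodule.mkQ, by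
      have hle : P.submodule ≤ U.1.comap P.submodule.mkQ := by
        have := LinearMap.ker_le_comap (p := U.1) (f := P.submodule.mkQ)
        rwa [Submodule.ker_mkQ] at this
      have hmc : (U.1.comap P.submodule.mkQ).map P.submodule.mkQ = U.1 :=
        Submodule.map_comap_eq_of_surjective (Submodule.mkQ_surjective _) _
      have h5 := finrank_map_mkQ hle
      rw [hmc, P.finrank_submodule, U.2] at h5; omega⟩, by
    show P.submodule ≤ _
    have := LinearMap.ker_le_comap (p := U.1) (f := P.submodule.mkQ)
    rwa [Submodule.ker_mkQ] at this⟩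
  left_inv L := by
    apply Subtype.ext; apply Subtype.ext
    show (L.1.1.map P.submodule.mkQ).comap P.submodule.mkQ = L.1.1
    rw [Submodule.comap_map_eq, Submodule.ker_mkQ, sup_eq_left]
    exact L.2
  right_inv U := by
    apply Subtype.ext
    exact Submodule.map_comap_eq_of_surjective (Submodule.mkQ_surjective _) _

noncomputable def lineDualEquiv :
    PGLine ≃ {Φ : Submodule (ZMod 11) (Module.Dual (ZMod 11) V3) // finrank (ZMod 11) Φ = 1} where
  toFun L := ⟨L.1.dualAnnihilator, by
    have h1 := Subspace.finrank_add_finrank_dualCoannihilator_eq L.1.dualAnnihilator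
    rw [Subspace.dualAnnihilator_dualCoannihilator_eq, L.2, finrank_V3] at h1; omega⟩
  invFun Φ := ⟨Φ.1.dualCoannihilator, by
    have h1 := Subspace.finrank_add_finrank_dualCoannihilator_eq Φ.1
    rw [Φ.2, finrank_V3] at h1; omega⟩
  left_inv L := Subtype.ext Subspace.dualAnnihilator_dualCoannihilator_eq
  right_inv Φ := Subtype.ext Subspace.dualCoannihilator_dualAnnihilator_eq

lemma exists_unique_line {P Q : PGPoint} (h : P ≠ Q) : ∃! L : PGLine, PGmem P L ∧ PGmem Q L := by
  have hPQ : P.submodule ≠ Q.submodule := fun h' => h (Projectivization.submodule_injective h')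
  have hinf : P.submodule ⊓ Q.submodule = ⊥ := by
    by_contra hne
    have h1 : finrank (ZMod 11) ↥(P.submodule ⊓ Q.submodule) ≠ 0 := by
      rw [Ne, Submodule.finrank_eq_zero]; exact hne
    have hP : P.submodule ⊓ Q.submodule = P.submodule := by
      apply Submodule.eq_of_le_of_finrank_le inf_le_left
      rw [P.finrank_submodule]; omega
    have hQ : P.submodule ⊓ Q.submodule = Q.submodule := by
      apply Submodule.eq_of_le_of_finrank_le inf_le_right
      rw [Q.finrank_submodule]; omega
    exact hPQ (hP ▸ hQ)
  have hsup : finrank (ZMod 11) ↥(P.submodule ⊔ Q.submodule) = 2 := by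
    have h6 := Submodule.finrank_sup_add_finrank_inf_eq P.submodule Q.submodule
    rw [hinf, finrank_bot, P.finrank_submodule, Q.finrank_submodule] at h6; omega
  refine ⟨⟨P.submodule ⊔ Q.submodule, hsup⟩, ⟨le_sup_left, le_sup_right⟩, ?_⟩
  rintro ⟨L, hL⟩ ⟨h1, h2⟩
  apply Subtype.ext
  exact (Submodule.eq_of_le_of_finrank_le (sup_le h1 h2) (by rw [hsup, hL])).symm

instance : Finite PGPoint := Quotient.finite _
instance : Finite (Module.Dual (ZMod 11) V3) :=
  Finite.of_injective _ (DFunLike.coe_injective)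

lemma card_linesThrough (P : PGPoint) : Nat.card {L : PGLine // PGmem P L} = 12 := by
  have e1 := Nat.card_congr (linesThroughEquiv P)
  have e2 := Nat.card_congr
    (Projectivization.equivSubmodule (ZMod 11) (V3 ⧸ P.submodule))
  have h2 : finrank (ZMod 11) (V3 ⧸ P.submodule) = 2 := by
    have h5 := finrank_quot P.submodule
    rw [P.finrank_submodule] at h5; omega
  have h3 := card_proj (V3 ⧸ P.submodule)
  rw [h2] at h3
  norm_num at h3
  omega

lemma card_lines : Nat.card PGLine = 133 := by
  have e1 := Nat.card_congr lineDualEquiv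
  have e2 := Nat.card_congr
    (Projectivization.equivSubmodule (ZMod 11) (Module.Dual (ZMod 11) V3))
  have h2 : finrank (ZMod 11) (Module.Dual (ZMod 11) V3) = 3 := by
    rw [Subspace.dual_finrank_eq]; exact finrank_V3
  have h3 := card_proj (Module.Dual (ZMod 11) V3)
  rw [h2] at h3
  norm_num at h3
  omega

/-! #### Combinatorial double-counting helpers -/

lemma card_filter_unique {β : Type*} [Fintype β] {p : β → Prop} [DecidablePred p]
    (h : ∃! b, p b) : (Finset.univ.filter p).card = 1 := by
  obtain ⟨b, hb, hu⟩ := h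
  rw [Finset.card_eq_one]
  exact ⟨b, by ext c; simp only [Finset.mem_filter, Finset.mem_univ, true_and,
    Finset.mem_singleton]; exact ⟨fun hc => hu c hc, fun hc => hc ▸ hb⟩⟩

lemma flag_swap {α β : Type*} [Fintype β] (S : Finset α) (r : α → β → Prop)
    [∀ a b, Decidable (r a b)] (p : β → Prop) [DecidablePred p] :
    ∑ a ∈ S, (Finset.univ.filter fun b => r a b ∧ p b).card
      = ∑ b ∈ Finset.univ.filter p, (S.filter fun a => r a b).card := by
  simp only [Finset.card_filter]
  rw [Finset.sum_comm]
  rw [Finset.sum_filter]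
  congr 1; ext b
  by_cases hb : p b
  · simp [hb]
  · simp [hb]

lemma pair_swap {α β : Type*} [Fintype β] [DecidableEq α] (S : Finset α) (r : α → β → Prop)
    [∀ a b, Decidable (r a b)] :
    ∑ b : β, ((S.filter fun a => r a b).card * ((S.filter fun a => r a b).card - 1))
      = ∑ a ∈ S, ∑ c ∈ S.erase a, (Finset.univ.filter fun b => r a b ∧ r c b).card := by
  have step : ∀ b : β, (S.filter fun a => r a b).card * ((S.filter fun a => r a b).card - 1)
      = ∑ a ∈ S, ∑ c ∈ S.erase a, (if r a b ∧ r c b then 1 else 0) := by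
    intro b
    set t := S.filter fun a => r a b with ht
    have h1 : ∀ a, ∑ c ∈ S.erase a, (if r a b ∧ r c b then 1 else 0)
        = if r a b then (t.erase a).card else 0 := by
      intro a
      by_cases hra : r a b
      · simp only [hra, true_and, if_true]
        rw [ht, ← Finset.filter_erase, Finset.card_filter]
      · simp [hra]
    rw [Finset.sum_congr rfl (fun a _ => h1 a)]
    rw [← Finset.sum_filter, ← ht]
    have h2 : ∀ a ∈ t, (t.erase a).card = t.card - 1 := fun a ha => Finset.card_erase_of_mem ha
    rw [Finset.sum_congr rfl h2, Finset.sum_const, smul_eq_mul]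
  rw [Finset.sum_congr rfl (fun b _ => step b)]
  rw [Finset.sum_comm]
  congr 1; ext a
  rw [Finset.sum_comm]
  congr 1; ext c
  rw [Finset.card_filter]

end PGAux

open PGAux in
theorem at_least_four_points_on_three_6_secants (S : Set PGPoint) (hS : IsBlockingSemioval S) (hcard : S.ncard = 25)
    (hmax : ∀ L : PGLine, (secantPts S L).ncard ≤ 6) :
    4 ≤ ({P ∈ S | ({L : PGLine | PGmem P L ∧ IsSecant S 6 L}).ncard = 3}).ncard := by
  classical
  obtain ⟨⟨hblock, -⟩, hsemi⟩ := hS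
  have : Fintype PGPoint := Fintype.ofFinite _
  have : Fintype PGLine := Fintype.ofFinite _
  -- the finset of points of S
  set SF : Finset PGPoint := S.toFinite.toFinset with hSFdef
  have hmemSF : ∀ P, P ∈ SF ↔ P ∈ S := fun P => Set.Finite.mem_toFinset _
  have hSFcard : SF.card = 25 := by
    rw [← hcard, Set.ncard_eq_toFinset_card S S.toFinite]
  -- the secant-size function
  set e : PGLine → ℕ := fun L => (SF.filter fun P => PGmem P L).card with he
  have hsec : ∀ L, (secantPts S L).ncard = e L := by
    intro L
    have hL : secantPts S L = ↑(SF.filter fun P => PGmem P L) := by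
      ext P
      simp only [secantPts, Set.mem_setOf_eq, Finset.coe_filter, hmemSF]
    rw [hL, Set.ncard_coe_finset]
  have hlow : ∀ L, 1 ≤ e L := by
    intro L
    have h1 := (Set.ncard_pos (secantPts S L).toFinite).2 (hblock L)
    rw [hsec] at h1; omega
  have hhigh : ∀ L, e L ≤ 6 := by
    intro L
    have h1 := hmax L
    rwa [hsec] at h1
  -- twelve lines through each point
  have hl12 : ∀ P : PGPoint, (Finset.univ.filter fun L => PGmem P L).card = 12 := by
    intro P
    have h1 := card_linesThrough P
    rwa [Nat.card_eq_fintype_card, Fintype.card_subtype] at h1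
  -- per point per size counts
  set sc : PGPoint → ℕ → ℕ :=
    fun P k => (Finset.univ.filter fun L => PGmem P L ∧ e L = k).card with hsc
  -- global size counts
  set N : ℕ → ℕ := fun k => (Finset.univ.filter fun L => e L = k).card with hN
  -- the flag identity
  have flag : ∀ (p : PGLine → Prop), ∀ (_ : DecidablePred p),
      ∑ P ∈ SF, (Finset.univ.filter fun L => PGmem P L ∧ p L).card
        = ∑ L ∈ Finset.univ.filter p, e L := by
    intro p hp
    exact flag_swap SF PGmem p
  -- total flags
  have hcount1 : ∑ L : PGLine, e L = 300 := by
    have h1 := flag (fun _ => True) inferInstance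
    simp only [and_true, Finset.filter_true] at h1
    rw [← h1, Finset.sum_congr rfl (fun P _ => hl12 P), Finset.sum_const, hSFcard,
      smul_eq_mul]
  -- ordered pairs of distinct points of S on a common line
  have hpairs : ∑ L : PGLine, e L * (e L - 1) = 600 := by
    have h1 := pair_swap SF PGmem
    have h2 : ∀ P ∈ SF, ∀ Q ∈ SF.erase P,
        (Finset.univ.filter fun L => PGmem P L ∧ PGmem Q L).card = 1 := by
      intro P _ Q hQ
      exact card_filter_unique (exists_unique_line (Finset.ne_of_mem_erase hQ).symm)
    have h3 : ∀ P ∈ SF, ∑ Q ∈ SF.erase P,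
        (Finset.univ.filter fun L => PGmem P L ∧ PGmem Q L).card = 24 := by
      intro P hP
      rw [Finset.sum_congr rfl (h2 P hP), Finset.sum_const, smul_eq_mul,
        Finset.card_erase_of_mem hP, hSFcard]
    rw [h1, Finset.sum_congr rfl h3, Finset.sum_const, hSFcard, smul_eq_mul]
  -- each tangent count is 1
  have htang : ∀ P ∈ SF, sc P 1 = 1 := by
    intro P hP
    obtain ⟨L0, hL0, hu⟩ := hsemi P ((hmemSF P).1 hP)
    apply card_filter_unique
    refine ⟨L0, ⟨hL0.1, ?_⟩, fun L hL => hu L ⟨hL.1, ?_⟩⟩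
    · have : (secantPts S L0).ncard = 1 := hL0.2
      rw [hsec] at this; exact this
    · show (secantPts S L).ncard = 1
      rw [hsec]; exact hL.2
  -- N 1 = 25
  have hN1 : N 1 = 25 := by
    have h1 := flag (fun L => e L = 1) inferInstance
    rw [Finset.sum_congr rfl (fun P hP => htang P hP), Finset.sum_const, hSFcard,
      smul_eq_mul, mul_one] at h1
    have h2 : ∑ L ∈ Finset.univ.filter (fun L => e L = 1), e L
        = ∑ L ∈ Finset.univ.filter (fun L => e L = 1), 1 := by
      apply Finset.sum_congr rfl
      intro L hL
      exact (Finset.mem_filter.1 hL).2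
    rw [h2, Finset.sum_const, smul_eq_mul, mul_one] at h1
    simp only [hN]
    exact h1.symm
  -- the per-point equations
  have hk4 : ∀ P ∈ SF, ∑ k ∈ Finset.range 7, sc P k = 12 := by
    intro P _
    have h1 := Finset.card_eq_sum_card_fiberwise
      (f := e) (s := Finset.univ.filter fun L => PGmem P L) (t := Finset.range 7)
      (fun L _ => Finset.mem_range.2 (by have := hhigh L; omega))
    rw [hl12 P] at h1
    have h2 : ∀ k, sc P k
        = ((Finset.univ.filter fun L => PGmem P L).filter (fun L => e L = k)).card := by
      intro k
      simp only [hsc]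
      rw [Finset.filter_filter]
    rw [Finset.sum_congr rfl (fun k _ => h2 k)]
    exact h1.symm
  have hk36 : ∀ P ∈ SF, ∑ L ∈ Finset.univ.filter (fun L => PGmem P L), e L = 36 := by
    intro P hP
    have h1 := flag_swap SF PGmem (fun L => PGmem P L)
    have h2 : ∀ Q ∈ SF.erase P,
        (Finset.univ.filter fun L => PGmem Q L ∧ PGmem P L).card = 1 := by
      intro Q hQ
      exact card_filter_unique (exists_unique_line (Finset.ne_of_mem_erase hQ))
    have h3 : ∑ Q ∈ SF, (Finset.univ.filter fun L => PGmem Q L ∧ PGmem P L).card = 36 := by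
      rw [← Finset.add_sum_erase SF _ hP]
      rw [Finset.sum_congr rfl h2, Finset.sum_const, smul_eq_mul, mul_one,
        Finset.card_erase_of_mem hP, hSFcard]
      have h4 : (Finset.univ.filter fun L => PGmem P L ∧ PGmem P L).card = 12 := by
        rw [← hl12 P]; congr 1; ext L; simp [and_self]
      rw [h4]
    rw [← h1, h3]
  have hk5 : ∀ P ∈ SF, ∑ k ∈ Finset.range 7, k * sc P k = 36 := by
    intro P hP
    have h1 := Finset.sum_fiberwise_of_maps_to
      (g := e) (f := e) (s := Finset.univ.filter fun L => PGmem P L) (t := Finset.range 7)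
      (fun L _ => Finset.mem_range.2 (by have := hhigh L; omega))
    rw [hk36 P hP] at h1
    have h2 : ∀ k, k * sc P k
        = ∑ L ∈ (Finset.univ.filter fun L => PGmem P L).filter (fun L => e L = k), e L := by
      intro k
      have h3 : ∑ L ∈ (Finset.univ.filter fun L => PGmem P L).filter (fun L => e L = k), e L
          = ∑ _L ∈ (Finset.univ.filter fun L => PGmem P L).filter (fun L => e L = k), k :=
        Finset.sum_congr rfl (fun L hL => (Finset.mem_filter.1 hL).2)
      rw [h3, Finset.sum_const, smul_eq_mul, mul_comm]
      congr 1
      simp only [hsc]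
      rw [Finset.filter_filter]
    rw [Finset.sum_congr rfl (fun k _ => h2 k)]
    exact h1
  have hsc0 : ∀ P, sc P 0 = 0 := by
    intro P
    rw [hsc]
    simp only [Finset.card_eq_zero, Finset.filter_eq_empty_iff]
    intro L _
    have := hlow L
    rintro ⟨-, h0⟩
    omega
  -- each point lies on at most three 6-secants
  have hs6le : ∀ P ∈ SF, sc P 6 ≤ 3 := by
    intro P hP
    have h4 := hk4 P hP
    have h5 := hk5 P hP
    have ht := htang P hP
    have h0 := hsc0 P
    simp only [Finset.sum_range_succ, Finset.sum_range_zero] at h4 h5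
    omega
  -- global equations
  have hNsum : ∑ k ∈ Finset.range 7, N k = 133 := by
    have h1 := Finset.card_eq_sum_card_fiberwise
      (f := e) (s := Finset.univ) (t := Finset.range 7)
      (fun L _ => Finset.mem_range.2 (by have := hhigh L; omega))
    rw [Finset.card_univ, ← Nat.card_eq_fintype_card, card_lines] at h1
    exact h1.symm
  have hNk : ∑ k ∈ Finset.range 7, k * N k = 300 := by
    have h1 := Finset.sum_fiberwise_of_maps_to
      (g := e) (f := e) (s := Finset.univ) (t := Finset.range 7)
      (fun L _ => Finset.mem_range.2 (by have := hhigh L; omega))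
    rw [hcount1] at h1
    have h2 : ∀ k, k * N k = ∑ L ∈ Finset.univ.filter (fun L => e L = k), e L := by
      intro k
      have h3 : ∑ L ∈ Finset.univ.filter (fun L => e L = k), e L
          = ∑ _L ∈ Finset.univ.filter (fun L => e L = k), k :=
        Finset.sum_congr rfl (fun L hL => (Finset.mem_filter.1 hL).2)
      rw [h3, Finset.sum_const, smul_eq_mul, mul_comm]
    rw [Finset.sum_congr rfl (fun k _ => h2 k)]
    exact h1
  have hNkk : ∑ k ∈ Finset.range 7, k * (k - 1) * N k = 600 := by
    have h1 := Finset.sum_fiberwise_of_maps_to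
      (g := e) (f := fun L => e L * (e L - 1)) (s := Finset.univ) (t := Finset.range 7)
      (fun L _ => Finset.mem_range.2 (by have := hhigh L; omega))
    rw [hpairs] at h1
    have h2 : ∀ k, k * (k - 1) * N k
        = ∑ L ∈ Finset.univ.filter (fun L => e L = k), e L * (e L - 1) := by
      intro k
      have h3 : ∑ L ∈ Finset.univ.filter (fun L => e L = k), e L * (e L - 1)
          = ∑ _L ∈ Finset.univ.filter (fun L => e L = k), k * (k - 1) := by
        apply Finset.sum_congr rfl
        intro L hL
        rw [(Finset.mem_filter.1 hL).2]
      rw [h3, Finset.sum_const, smul_eq_mul, mul_comm]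
    rw [Finset.sum_congr rfl (fun k _ => h2 k)]
    exact h1
  have hN0 : N 0 = 0 := by
    rw [hN]
    simp only [Finset.card_eq_zero, Finset.filter_eq_empty_iff]
    intro L _
    have := hlow L
    omega
  have hN6 : 9 ≤ N 6 := by
    simp only [Finset.sum_range_succ, Finset.sum_range_zero] at hNsum hNk hNkk
    omega
  -- total 6-secant flags
  have hflag6 : ∑ P ∈ SF, sc P 6 = 6 * N 6 := by
    have h1 := flag (fun L => e L = 6) inferInstance
    have h2 : ∑ L ∈ Finset.univ.filter (fun L => e L = 6), e L
        = ∑ L ∈ Finset.univ.filter (fun L => e L = 6), 6 :=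
      Finset.sum_congr rfl (fun L hL => (Finset.mem_filter.1 hL).2)
    rw [h2, Finset.sum_const, smul_eq_mul, mul_comm] at h1
    exact h1
  -- identify the goal set with a finset
  set T : Finset PGPoint := SF.filter (fun P => sc P 6 = 3) with hT
  have hgoal : {P | P ∈ S ∧ {L | PGmem P L ∧ IsSecant S 6 L}.ncard = 3} = ↑T := by
    ext P
    have hinner : {L : PGLine | PGmem P L ∧ IsSecant S 6 L}
        = ↑(Finset.univ.filter fun L => PGmem P L ∧ e L = 6) := by
      ext L
      simp only [Set.mem_setOf_eq, Finset.coe_filter, Finset.mem_univ, true_and]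
      constructor
      · rintro ⟨h1, h2⟩
        refine ⟨h1, ?_⟩
        have : (secantPts S L).ncard = 6 := h2
        rwa [hsec] at this
      · rintro ⟨h1, h2⟩
        refine ⟨h1, ?_⟩
        show (secantPts S L).ncard = 6
        rwa [hsec]
    constructor
    · rintro ⟨h1, h2⟩
      rw [hinner, Set.ncard_coe_finset] at h2
      refine Finset.mem_coe.2 (Finset.mem_filter.2 ⟨(hmemSF P).2 h1, ?_⟩)
      simp only [hsc]
      exact h2
    · intro hPT
      obtain ⟨hPS, h3⟩ := Finset.mem_filter.1 (Finset.mem_coe.1 hPT)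
      refine ⟨(hmemSF P).1 hPS, ?_⟩
      rw [hinner, Set.ncard_coe_finset]
      simp only [hsc] at h3
      exact h3
  rw [hgoal, Set.ncard_coe_finset]
  -- final count
  have hup : ∑ P ∈ SF, sc P 6 ≤ 3 * T.card + 2 * (25 - T.card) := by
    have h1 : ∑ P ∈ SF, sc P 6 ≤ ∑ P ∈ SF, (if sc P 6 = 3 then 3 else 2) := by
      apply Finset.sum_le_sum
      intro P hP
      have := hs6le P hP
      by_cases h : sc P 6 = 3 <;> simp [h] <;> omega
    have h2 : ∑ P ∈ SF, (if sc P 6 = 3 then 3 else 2)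
        = 3 * (SF.filter (fun P => sc P 6 = 3)).card
          + 2 * (SF.filter (fun P => ¬ sc P 6 = 3)).card := by
      rw [Finset.sum_ite, Finset.sum_const, Finset.sum_const, smul_eq_mul, smul_eq_mul,
        mul_comm, mul_comm (SF.filter fun P => ¬ sc P 6 = 3).card]
    have h3 := Finset.card_filter_add_card_filter_not
      (s := SF) (p := fun P => sc P 6 = 3)
    beta_reduce at h3
    have h4 : T.card = (SF.filter (fun P => sc P 6 = 3)).card := by rw [hT]
    rw [h2] at h1
    rw [h4]
    omega
  rw [hflag6] at hup
  omega
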